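/- For all r, s ∈ ℝ, ‖r(0,1,0)ᵗ + s·(1/2)(−1,−τ,τ')ᵗ‖ = |r + s ζ₅³| = √(r² + s² − r s τ), where the norm is the Euclidean norm in ℝ³. -/

import Mathlib

noncomputable def τ : ℝ := (1 + Real.sqrt 5) / 2

noncomputable def τ' : ℝ := 1 - τ

noncomputable def ζ₅ : ℂ := Complex.exp (2 * Real.pi * Complex.I / 5)

lemma zabs_eq (r s : ℝ) :
    ‖(r : ℂ) + (s : ℂ) * ζ₅ ^ 3‖ = Real.sqrt (r ^ 2 + s ^ 2 - r * s * τ) := by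
  have hζ : ζ₅ ^ 3 = Complex.exp ((6 * Real.pi / 5) * Complex.I) := by
    rw [ζ₅, ← Complex.exp_nat_mul]
    ring_nf
  have hcos : Real.cos (6 * Real.pi / 5) = -((1 + Real.sqrt 5) / 4) := by
    have : (6 * Real.pi / 5) = Real.pi + Real.pi / 5 := by ring
    rw [this, Real.cos_add, Real.cos_pi_div_five]; simp
  set θ : ℝ := 6*Real.pi/5 with hθ
  have hre : ((r:ℂ) + (s:ℂ) * ζ₅ ^ 3).re = r + s * Real.cos θ := by
    rw [hζ]; simp [Complex.exp_re, hθ]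
  have him : ((r:ℂ) + (s:ℂ) * ζ₅ ^ 3).im = s * Real.sin θ := by
    rw [hζ]; simp [Complex.exp_im, hθ]
  rw [Complex.norm_def, Complex.normSq_apply, hre, him]
  congr 1
  have h2 : Real.sin θ^2 = 1 - Real.cos θ^2 := by
    have := Real.sin_sq_add_cos_sq θ; linarith
  rw [show s * Real.sin θ * (s * Real.sin θ) = s^2 * Real.sin θ^2 by ring, h2, hcos, τ]
  ring

theorem Phi_star_isometry (r s : ℝ) :
    ‖r • (WithLp.equiv 2 (Fin 3 → ℝ)).symm ![0, 1, 0] +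
      s • (WithLp.equiv 2 (Fin 3 → ℝ)).symm ((1 / 2 : ℝ) • ![-1, -τ, τ'])‖ =
      ‖(r : ℂ) + (s : ℂ) * ζ₅ ^ 3‖ ∧
    ‖(r : ℂ) + (s : ℂ) * ζ₅ ^ 3‖ = Real.sqrt (r ^ 2 + s ^ 2 - r * s * τ) := by
  refine ⟨?_, zabs_eq r s⟩
  rw [zabs_eq r s]
  rw [EuclideanSpace.norm_eq]
  congr 1
  simp [Fin.sum_univ_three, WithLp.equiv_symm_apply, τ']
  have hτ : τ^2 = τ + 1 := by
    rw [τ]; have h5 : Real.sqrt 5 ^ 2 = 5 := Real.sq_sqrt (by norm_num)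
    nlinarith [h5]
  nlinarith [hτ]
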